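/- arXiv:2206.01555 — 2 statements merged into one kernel-verified Lean document; each statement's English description precedes it below -/
import Mathlib

section
/- Assume every descending chain X₁ ⊇ X₂ ⊇ ⋯ of closed subsets of a polynomial functor P stabilizes. Then for each closed subset X ⊆ P there exists n₀ ∈ ℕ such that for all finite-dimensional V: X(V) = ⋂_{φ ∈ Hom(V, K^{n₀})} P(φ)⁻¹(X(K^{n₀})). That is, X is defined by its 'equations' in P(K^{n₀}). -/
open CategoryTheory

/-- Assume every descending chain of closed subsets (subfunctors) of the functor `P` on
finite-dimensional `K`-vector spaces stabilizes.  Then every subfunctor `X` of `P` is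
defined by its "equations" in `P(K^{n₀})` for some `n₀`:
`X(V) = ⋂_{φ : V → K^{n₀}} P(φ)⁻¹(X(K^{n₀}))` for all `V`. -/
theorem stmt5 (K : Type) [Field K] (P : FGModuleCat K ⥤ Type)
    (hNoeth : ∀ Y : ℕ → ∀ V : FGModuleCat K, Set (P.obj V),
      (∀ n, ∀ {U V : FGModuleCat K} (φ : U ⟶ V), ∀ x ∈ Y n U, P.map φ x ∈ Y n V) →
      (∀ n, ∀ V : FGModuleCat K, Y (n + 1) V ⊆ Y n V) →
      ∃ n₀ : ℕ, ∀ n, n₀ ≤ n → Y n = Y n₀)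
    (X : ∀ V : FGModuleCat K, Set (P.obj V))
    (hX : ∀ {U V : FGModuleCat K} (φ : U ⟶ V), ∀ x ∈ X U, P.map φ x ∈ X V) :
    ∃ n₀ : ℕ, ∀ V : FGModuleCat K,
      X V = ⋂ φ : V ⟶ FGModuleCat.of K (Fin n₀ → K),
        (fun p => P.map φ p) ⁻¹' (X (FGModuleCat.of K (Fin n₀ → K))) := by
  classical
  set Kn : ℕ → FGModuleCat K := fun n => FGModuleCat.of K (Fin n → K) with hKn
  set Y : ℕ → ∀ V : FGModuleCat K, Set (P.obj V) := fun n V =>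
    ⋂ φ : V ⟶ Kn n, (fun p => P.map φ p) ⁻¹' (X (Kn n)) with hY
  have hYmem : ∀ n (V : FGModuleCat K) (x : P.obj V),
      x ∈ Y n V ↔ ∀ φ : V ⟶ Kn n, P.map φ x ∈ X (Kn n) := by
    intro n V x
    simp [hY, Set.mem_iInter]
  -- Y n is a subfunctor
  have hfun : ∀ n, ∀ {U V : FGModuleCat K} (φ : U ⟶ V), ∀ x ∈ Y n U,
      P.map φ x ∈ Y n V := by
    intro n U V φ x hx
    rw [hYmem]
    intro ψ
    have := (hYmem n U x).1 hx (φ ≫ ψ)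
    rwa [FunctorToTypes.map_comp_apply] at this
  -- descending
  have hdesc : ∀ n, ∀ V : FGModuleCat K, Y (n + 1) V ⊆ Y n V := by
    intro n V x hx
    rw [hYmem]
    intro ψ
    have hcast : Function.Injective (Fin.castSucc : Fin n → Fin (n + 1)) :=
      Fin.castSucc_injective n
    let ι : Kn n ⟶ Kn (n + 1) := FGModuleCat.ofHom (Function.ExtendByZero.linearMap K Fin.castSucc)
    let π : Kn (n + 1) ⟶ Kn n := FGModuleCat.ofHom (LinearMap.funLeft K K Fin.castSucc)
    have hψ : ψ = (ψ ≫ ι) ≫ π := by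
      apply FGModuleCat.hom_ext
      apply LinearMap.ext
      intro v
      show ψ.hom.hom v = (fun i => Function.extend Fin.castSucc (ψ v) 0 (Fin.castSucc i))
      funext i
      rw [hcast.extend_apply]
      rfl
    rw [hψ, FunctorToTypes.map_comp_apply]
    exact hX π _ ((hYmem (n + 1) V x).1 hx (ψ ≫ ι))
  obtain ⟨n₀, hn₀⟩ := hNoeth Y hfun hdesc
  refine ⟨n₀, fun V => ?_⟩
  show X V = Y n₀ V
  apply Set.Subset.antisymm
  · intro x hx
    rw [hYmem]
    intro φ
    exact hX φ x hx
  · intro x hx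
    set m := Module.finrank K V with hm
    set n := n₀ + m with hn
    have hle : m ≤ n := Nat.le_add_left m n₀
    have hx' : x ∈ Y n V := by rw [hn₀ n (Nat.le_add_right n₀ m)]; exact hx
    have hcast : Function.Injective (Fin.castLE hle) := Fin.castLE_injective hle
    let e : V ≃ₗ[K] (Fin m → K) := (Module.finBasis K V).equivFun
    let ι : V ⟶ Kn n :=
      FGModuleCat.ofHom ((Function.ExtendByZero.linearMap K (Fin.castLE hle)).comp e.toLinearMap)
    let π : Kn n ⟶ V := FGModuleCat.ofHom (e.symm.toLinearMap.comp (LinearMap.funLeft K K (Fin.castLE hle)))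
    have hid : ι ≫ π = 𝟙 V := by
      apply FGModuleCat.hom_ext
      apply LinearMap.ext
      intro v
      show e.symm (fun i => Function.extend (Fin.castLE hle) (e v) 0 (Fin.castLE hle i)) = v
      have : (fun i => Function.extend (Fin.castLE hle) (e v) 0 (Fin.castLE hle i)) = e v := by
        funext i; rw [hcast.extend_apply]
      rw [this, e.symm_apply_apply]
    have : P.map ι x ∈ X (Kn n) := (hYmem n V x).1 hx' ι
    have h2 := hX π _ this
    rw [← FunctorToTypes.map_comp_apply, hid, FunctorToTypes.map_id_apply] at h2
    exact h2
end

section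
/- Let B be an affine variety over a field K, let Q be a functor on finite-dimensional K-vector spaces with values in finite-dimensional K-vector spaces, let R be a subfunctor of Q with quotient Q' = Q/R and projection π : Q → Q'. Let X be a subfunctor of B × Q and let X' be the subfunctor of B × Q' given by X'(V) = closure of (id_B × π_V)(X(V)). Fix U and suppose: (i) X is defined by its equations in B × Q(U), i.e., X(V) = {(b,q) : (b, Q(φ)q) ∈ X(U) for all linear φ : V → U}; (ii) X(U) = (id_B × π_U)⁻¹(X'(U)). Then for every V, X(V) = (id_B × π_V)⁻¹(X'(V)); in particular X = X' × R. -/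
open CategoryTheory

/-- Projection lemma, part 1 (set-theoretic version).  Let `Q, Q'` be functors on
finite-dimensional `K`-vector spaces with a natural projection `π : Q ⟶ Q'`, `B` an affine
variety (a set suffices), `X` a subfunctor of `B × Q` and `X'` a subfunctor of `B × Q'`
containing the image of `X` under `id_B × π`.  If (i) `X` is defined by its equations in
`B × Q(U)` and (ii) `X(U) = (id_B × π_U)⁻¹(X'(U))`, then for every `V`,
`X(V) = (id_B × π_V)⁻¹(X'(V))`; in particular `X = X' × R`. -/
theorem stmt6 (K : Type) [Field K] (B : Type)
    (Q Q' : FGModuleCat K ⥤ Type) (π : Q ⟶ Q')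
    (X : ∀ V : FGModuleCat K, Set (B × Q.obj V))
    (X' : ∀ V : FGModuleCat K, Set (B × Q'.obj V))
    (hX : ∀ {V W : FGModuleCat K} (φ : V ⟶ W), ∀ b q, (b, q) ∈ X V → (b, Q.map φ q) ∈ X W)
    (hX' : ∀ {V W : FGModuleCat K} (φ : V ⟶ W), ∀ b q', (b, q') ∈ X' V →
      (b, Q'.map φ q') ∈ X' W)
    (himg : ∀ (V : FGModuleCat K) (b : B) (q : Q.obj V), (b, q) ∈ X V → (b, π.app V q) ∈ X' V)
    (U : FGModuleCat K)
    (hdef : ∀ (V : FGModuleCat K) (b : B) (q : Q.obj V),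
      (∀ φ : V ⟶ U, (b, Q.map φ q) ∈ X U) → (b, q) ∈ X V)
    (hU : ∀ (b : B) (q : Q.obj U), (b, π.app U q) ∈ X' U → (b, q) ∈ X U) :
    ∀ (V : FGModuleCat K) (b : B) (q : Q.obj V),
      (b, q) ∈ X V ↔ (b, π.app V q) ∈ X' V := by
  intro V b q
  constructor
  · exact himg V b q
  · intro h
    apply hdef
    intro φ
    apply hU
    have := FunctorToTypes.naturality π φ q
    rw [this]
    exact hX' φ b _ h
end
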